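/- (Sub-optimality bound for mixture-of-agents decoding, abstract form) Let T be a finite nonempty set, ρ_ref a fully supported distribution on T, r_target : T → ℝ, and r_1,…,r_K : T → ℝ with associated policies ρ_1,…,ρ_K, where each ρ_j maximizes ρ ↦ E_ρ[r_j] − β KL(ρ‖ρ_ref) for some β > 0. Let ρ* maximize ρ ↦ E_ρ[r_target] − β KL(ρ‖ρ_ref). Suppose the algorithm's value satisfies J_alg ≥ J_j := E_{ρ_j}[r_target] − α c_j for every j, where c_j = KL(π_j‖π_ref) ≥ 0 are token-level KL terms with α > 0, and the algorithm's Q-value satisfies Q_alg = J_alg + α c_alg with c_alg ≥ 0. Then Q* − Q_alg ≤ min over j of [ 2 δ_{*j} + α c_j + β KL(ρ*‖ρ_ref) ], where Q* = E_{ρ*}[r_target], Q_alg is the algorithm's Q-value, and δ_{*j} = max_τ |r_target(τ) − r_j(τ)|. -/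
import Mathlib


open Finset

noncomputable def KL {T : Type*} [Fintype T] (p q : T → ℝ) : ℝ :=
  ∑ τ, p τ * Real.log (p τ / q τ)


lemma KL_nonneg' {T : Type*} [Fintype T] (p q : T → ℝ)
    (hq : ∀ τ, 0 < q τ) (hp : ∀ τ, 0 ≤ p τ)
    (hps : ∑ τ, p τ = 1) (hqs : ∑ τ, q τ = 1) : 0 ≤ KL p q := by
  have h : ∀ τ, p τ - q τ ≤ p τ * Real.log (p τ / q τ) := by
    intro τ
    rcases eq_or_lt_of_le (hp τ) with h0 | h0
    · simp [← h0]
      linarith [(hq τ).le]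
    · have hl := Real.log_le_sub_one_of_pos (div_pos (hq τ) h0)
      have : Real.log (p τ / q τ) = - Real.log (q τ / p τ) := by
        rw [← Real.log_inv]
        congr 1
        field_simp
      rw [this]
      have hd : q τ / p τ - 1 = (q τ - p τ) / p τ := by field_simp
      rw [hd] at hl
      have := mul_le_mul_of_nonneg_left hl (hp τ)
      rw [mul_div_cancel₀ _ (ne_of_gt h0)] at this
      nlinarith
  have h2 := Finset.sum_le_sum (fun τ (_ : τ ∈ Finset.univ) => h τ)
  have hsum : ∑ τ, (p τ - q τ) = (0:ℝ) := by
    rw [Finset.sum_sub_distrib, hps, hqs]; ring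
  unfold KL
  linarith

lemma exp_le_sup {T : Type*} [Fintype T] [Nonempty T] (p f : T → ℝ) (M : ℝ)
    (hp : ∀ τ, 0 ≤ p τ) (hps : ∑ τ, p τ = 1) (hf : ∀ τ, f τ ≤ M) :
    ∑ τ, p τ * f τ ≤ M := by
  calc ∑ τ, p τ * f τ ≤ ∑ τ, p τ * M :=
        Finset.sum_le_sum (fun τ _ => mul_le_mul_of_nonneg_left (hf τ) (hp τ))
    _ = M := by rw [← Finset.sum_mul, hps, one_mul]


theorem suboptimality_bound_mixture_of_agents
    {T : Type*} [Fintype T] [Nonempty T]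
    (ρref : T → ℝ) (href : ∀ τ, 0 < ρref τ) (hrefsum : ∑ τ, ρref τ = 1)
    (rtarget : T → ℝ) {K : ℕ} (hK : 0 < K)
    (r : Fin K → T → ℝ) (ρ : Fin K → T → ℝ) (β : ℝ) (hβ : 0 < β)
    (hρ0 : ∀ j τ, 0 ≤ ρ j τ) (hρ1 : ∀ j, ∑ τ, ρ j τ = 1)
    (hρac : ∀ j τ, ρref τ = 0 → ρ j τ = 0)
    (hρmax : ∀ (j : Fin K) (σ : T → ℝ), (∀ τ, 0 ≤ σ τ) → (∑ τ, σ τ = 1) →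
      (∀ τ, ρref τ = 0 → σ τ = 0) →
      (∑ τ, σ τ * r j τ) - β * KL σ ρref ≤ (∑ τ, ρ j τ * r j τ) - β * KL (ρ j) ρref)
    (ρstar : T → ℝ) (hρstar0 : ∀ τ, 0 ≤ ρstar τ) (hρstar1 : ∑ τ, ρstar τ = 1)
    (hρstarac : ∀ τ, ρref τ = 0 → ρstar τ = 0)
    (hρstarmax : ∀ σ : T → ℝ, (∀ τ, 0 ≤ σ τ) → (∑ τ, σ τ = 1) →
      (∀ τ, ρref τ = 0 → σ τ = 0) →
      (∑ τ, σ τ * rtarget τ) - β * KL σ ρref ≤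
        (∑ τ, ρstar τ * rtarget τ) - β * KL ρstar ρref)
    (α : ℝ) (hα : 0 < α) (c : Fin K → ℝ) (hc : ∀ j, 0 ≤ c j)
    (Jalg Qalg calg : ℝ) (hcalg : 0 ≤ calg)
    (hdom : ∀ j : Fin K, (∑ τ, ρ j τ * rtarget τ) - α * c j ≤ Jalg)
    (hQalg : Qalg = Jalg + α * calg)
    (Qstar : ℝ) (hQstar : Qstar = ∑ τ, ρstar τ * rtarget τ)
    (δ : Fin K → ℝ)
    (hδ : ∀ j, δ j = Finset.univ.sup' Finset.univ_nonempty
      (fun τ => |rtarget τ - r j τ|)) :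
    Qstar - Qalg ≤
      Finset.univ.inf' (Finset.univ_nonempty_iff.mpr (Fin.pos_iff_nonempty.mp hK))
        (fun j => 2 * δ j + α * c j + β * KL ρstar ρref) := by
  apply Finset.le_inf'
  intro j _
  have hopt := hρmax j ρstar hρstar0 hρstar1 hρstarac
  have hKLj := KL_nonneg' (ρ j) ρref href (hρ0 j) (hρ1 j) hrefsum
  have h1 : ∑ τ, ρstar τ * (rtarget τ - r j τ) ≤ δ j := by
    apply exp_le_sup _ _ _ hρstar0 hρstar1
    intro τ
    rw [hδ j]
    exact le_trans (le_abs_self _) (Finset.le_sup' (fun τ => |rtarget τ - r j τ|) (Finset.mem_univ τ))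
  have h2 : ∑ τ, ρ j τ * (r j τ - rtarget τ) ≤ δ j := by
    apply exp_le_sup _ _ _ (hρ0 j) (hρ1 j)
    intro τ
    rw [hδ j]
    calc r j τ - rtarget τ ≤ |rtarget τ - r j τ| := by
          rw [abs_sub_comm]; exact le_abs_self _
      _ ≤ _ := Finset.le_sup' (fun τ => |rtarget τ - r j τ|) (Finset.mem_univ τ)
  rw [show ∀ σ : T → ℝ, ∀ g h : T → ℝ, ∑ τ, σ τ * (g τ - h τ) = ∑ τ, σ τ * g τ - ∑ τ, σ τ * h τ
      from fun σ g h => by rw [← Finset.sum_sub_distrib]; exact Finset.sum_congr rfl (fun τ _ => by ring)] at h1 h2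
  have hd := hdom j
  nlinarith [mul_nonneg hα.le hcalg, mul_nonneg hβ.le hKLj]
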